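/- If a symmetric polynomial f in R[x_1, x_2] is a sum of squares of polynomials, then f can be written as f = f_1 + (x_1 - x_2)^2 f_2, where f_1 and f_2 are sums of squares of symmetric polynomials. -/

import Mathlib

open MvPolynomial

noncomputable section
abbrev σ2 : Equiv.Perm (Fin 2) := Equiv.swap 0 1

lemma perm_fin2 : ∀ τ : Equiv.Perm (Fin 2), τ = 1 ∨ τ = Equiv.swap 0 1 := by decide

lemma rename_swap_swap (p : MvPolynomial (Fin 2) ℝ) :
    rename σ2 (rename σ2 p) = p := by
  rw [rename_rename,
    show (⇑σ2 ∘ ⇑σ2) = id from funext fun x => Equiv.swap_apply_self 0 1 x, rename_id, AlgHom.id_apply]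

lemma isSymm_of_swap (p : MvPolynomial (Fin 2) ℝ) (h : rename σ2 p = p) :
    p.IsSymmetric := by
  intro τ
  rcases perm_fin2 τ with h1 | h1 <;> subst h1
  · simp
  · exact h

lemma dvd_sub_rename (p : MvPolynomial (Fin 2) ℝ) :
    (X 0 - X 1) ∣ (p - rename σ2 p) := by
  induction p using MvPolynomial.induction_on with
  | C a => simp
  | add p q hp hq =>
      have : p + q - rename σ2 (p + q) = (p - rename σ2 p) + (q - rename σ2 q) := by
        rw [map_add]; ring
      rw [this]; exact dvd_add hp hq
  | mul_X p i hp =>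
      have hre : rename σ2 (p * X i) = rename σ2 p * X (σ2 i) := by
        rw [map_mul, rename_X]
      have : p * X i - rename σ2 (p * X i)
          = (p - rename σ2 p) * X i + rename σ2 p * (X i - X (σ2 i)) := by
        rw [hre]; ring
      rw [this]
      refine dvd_add (Dvd.dvd.mul_right hp _) (Dvd.dvd.mul_left ?_ _)
      fin_cases i <;> simp [σ2]
      exact dvd_sub_comm.mp dvd_rfl
end

/-- A symmetric sum of squares in `ℝ[x₁,x₂]` can be written as
`f₁ + (x₁ - x₂)² f₂` where `f₁, f₂` are sums of squares of symmetric polynomials. -/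
theorem symmetric_sos_decomposition (f : MvPolynomial (Fin 2) ℝ)
    (hf : f.IsSymmetric)
    (hsos : ∃ (k : ℕ) (q : Fin k → MvPolynomial (Fin 2) ℝ), f = ∑ i, (q i) ^ 2) :
    ∃ f₁ f₂ : MvPolynomial (Fin 2) ℝ,
      (∃ (k : ℕ) (q : Fin k → MvPolynomial (Fin 2) ℝ),
        (∀ i, (q i).IsSymmetric) ∧ f₁ = ∑ i, (q i) ^ 2) ∧
      (∃ (k : ℕ) (q : Fin k → MvPolynomial (Fin 2) ℝ),
        (∀ i, (q i).IsSymmetric) ∧ f₂ = ∑ i, (q i) ^ 2) ∧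
      f = f₁ + (X 0 - X 1) ^ 2 * f₂ := by
  obtain ⟨k, q, hq⟩ := hsos
  have hw : (X 0 - X 1 : MvPolynomial (Fin 2) ℝ) ≠ 0 := by
    intro h
    have : (X 0 : MvPolynomial (Fin 2) ℝ) = X 1 := by linear_combination h
    exact (by norm_num : (0 : Fin 2) ≠ 1) (X_injective this)
  have hdvd : ∀ i, ∃ t, q i - rename σ2 (q i) = (X 0 - X 1) * t :=
    fun i => dvd_sub_rename (q i)
  choose t ht using hdvd
  have htsym : ∀ i, rename σ2 (t i) = t i := by
    intro i
    have h1 := congrArg (rename σ2) (ht i)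
    rw [map_sub, map_mul, rename_swap_swap, map_sub, rename_X, rename_X] at h1
    have h2 : (X 0 - X 1) * t i = (X 0 - X 1) * rename σ2 (t i) := by
      have : X (σ2 0) - X (σ2 1) = (X 1 - X 0 : MvPolynomial (Fin 2) ℝ) := by
        simp [σ2]
      rw [this] at h1
      linear_combination -h1 - ht i
    exact (mul_left_cancel₀ hw h2).symm
  set u : Fin k → MvPolynomial (Fin 2) ℝ :=
    fun i => C (1/2 : ℝ) * (q i + rename σ2 (q i)) with hu
  set v : Fin k → MvPolynomial (Fin 2) ℝ := fun i => C (1/2 : ℝ) * t i with hv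
  have h2 : (C (1/2 : ℝ) : MvPolynomial (Fin 2) ℝ) * 2 = 1 := by
    have : (2 : MvPolynomial (Fin 2) ℝ) = C (2 : ℝ) := by
      simp [map_ofNat]
    rw [this, ← C_mul]; norm_num
  have key1 : ∀ i, q i = u i + (X 0 - X 1) * v i := by
    intro i
    simp only [hu, hv]
    linear_combination (C ((1:ℝ)/2)) * ht i - q i * h2
  have key2 : ∀ i, rename σ2 (q i) = u i - (X 0 - X 1) * v i := by
    intro i
    simp only [hu, hv]
    linear_combination (-(C ((1:ℝ)/2))) * ht i - rename σ2 (q i) * h2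
  refine ⟨∑ i, (u i) ^ 2, ∑ i, (v i) ^ 2,
    ⟨k, u, fun i => ?_, rfl⟩, ⟨k, v, fun i => ?_, rfl⟩, ?_⟩
  · refine isSymm_of_swap _ ?_
    simp only [hu, map_mul, map_add, rename_C, rename_swap_swap]
    ring
  · refine isSymm_of_swap _ ?_
    simp only [hv, map_mul, rename_C, htsym i]
  · have hf2 : f = ∑ i, (rename σ2 (q i)) ^ 2 := by
      conv_lhs => rw [← hf σ2, hq]
      simp [map_sum, map_pow]
    have h2f : (2 : MvPolynomial (Fin 2) ℝ) * f
        = 2 * (∑ i, (u i) ^ 2 + (X 0 - X 1) ^ 2 * ∑ i, (v i) ^ 2) := by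
      calc (2 : MvPolynomial (Fin 2) ℝ) * f = ∑ i, ((q i) ^ 2 + (rename σ2 (q i)) ^ 2) := by
            rw [Finset.sum_add_distrib, ← hq, ← hf2]; ring
        _ = ∑ i, (2 * (u i) ^ 2 + 2 * (X 0 - X 1) ^ 2 * (v i) ^ 2) := by
            refine Finset.sum_congr rfl fun i _ => ?_
            rw [key2 i, key1 i]; ring
        _ = 2 * ∑ i, (u i) ^ 2 + 2 * (X 0 - X 1) ^ 2 * ∑ i, (v i) ^ 2 := by
            rw [Finset.sum_add_distrib, ← Finset.mul_sum, ← Finset.mul_sum]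
        _ = 2 * (∑ i, (u i) ^ 2 + (X 0 - X 1) ^ 2 * ∑ i, (v i) ^ 2) := by ring
    exact mul_left_cancel₀ two_ne_zero h2f
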